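/- Let Ω ⊂ [0,∞)^I be compact with min Ω > 0_I. Suppose every firm in a J-firm market uses the same stationary strategy given by a permutation invariant continuous value function V(x_j, {x_{j'}}_{j'∈𝒥∖{j}}) on Ω × Ω^{J−1}. Then the map ({x_{j'}}_{j'∈𝒥∖{j}}) ↦ ∑_{j'∈𝒥∖{j}} η_{I,J−1}(x_{j'}) is injective on multisets of J−1 competitor states, and V factors as V(x_j, {x_{j'}}) = V̄(x_j, ∑_{j'≠j} η_{I,J−1}(x_{j'})) for a continuous V̄; hence tracking the κ(I,J−1) moments ∑_{j'≠j} η_{I,J−1}(x_{j'}) in place of the full competitor state profile loses no information, i.e., moment-based state aggregation with degree-(J−1) multisymmetric power sums is exact. -/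

import Mathlib

open Finset Polynomial Topology

/-- Index set of monomials of total degree 1..(J-1) in I variables;
cardinality κ(I,J−1) = binom(J−1+I,I) − 1. -/
def MIdx (I J : ℕ) := {s : Fin I → ℕ // 1 ≤ ∑ i, s i ∧ ∑ i, s i ≤ J}

/-- The multisymmetric power sum map η_{I,J}. -/
noncomputable def eta (I J : ℕ) (x : Fin I → ℝ) : MIdx I J → ℝ :=
  fun s => ∏ i, x i ^ s.val i

/-- `MIdx I J` is finite. -/
noncomputable instance MIdx.instFintype (I J : ℕ) : Fintype (MIdx I J) :=
  Fintype.ofInjective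
    (fun s => (fun i => (⟨s.val i, Nat.lt_succ_of_le
      (le_trans (Finset.single_le_sum (fun _ _ => Nat.zero_le _) (Finset.mem_univ i))
        s.2.2)⟩ : Fin (J + 1)) : Fin I → Fin (J + 1)))
    (by
      intro s t h
      apply Subtype.ext
      funext i
      exact congrArg Fin.val (congrFun h i))

/-- Tuples whose lists-of-values are permutations differ by a permutation of indices. -/
theorem exists_perm_of_ofFn_perm {α : Type*} :
    ∀ {n : ℕ} (a b : Fin n → α), (List.ofFn a).Perm (List.ofFn b) →
      ∃ σ : Equiv.Perm (Fin n), b = a ∘ σ := by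
  intro n
  induction n with
  | zero =>
    intro a b _
    exact ⟨1, funext fun i => i.elim0⟩
  | succ n ih =>
    intro a b h
    have ha0 : a 0 ∈ List.ofFn b := h.mem_iff.mp (by simp [List.mem_ofFn])
    obtain ⟨k, hk⟩ := List.mem_ofFn.mp ha0
    set τ : Equiv.Perm (Fin (n+1)) := Equiv.swap 0 k with hτ
    have hb' : (List.ofFn (b ∘ τ)).Perm (List.ofFn b) := τ.ofFn_comp_perm b
    have h2 : (List.ofFn a).Perm (List.ofFn (b ∘ τ)) := h.trans hb'.symm
    have hhead : (b ∘ τ) 0 = a 0 := by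
      simp only [hτ, Function.comp_apply, Equiv.swap_apply_left]
      exact hk
    rw [List.ofFn_succ, List.ofFn_succ, hhead] at h2
    obtain ⟨σ', hσ'⟩ := ih _ _ h2.cons_inv
    set ρ : Equiv.Perm (Fin (n+1)) := Equiv.Perm.decomposeFin.symm (0, σ') with hρ
    have hbτ : b ∘ τ = a ∘ ρ := by
      funext i
      refine Fin.cases ?_ (fun j => ?_) i
      · have : ρ 0 = 0 := Equiv.Perm.decomposeFin_symm_apply_zero 0 σ'
        simpa [this] using hhead
      · have hr : ρ j.succ = (σ' j).succ := by
          simp [hρ, Equiv.Perm.decomposeFin_symm_apply_succ]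
        have := congrFun hσ' j
        simpa [hr] using this
    refine ⟨τ.symm.trans ρ, funext fun i => ?_⟩
    have : (b ∘ τ) (τ.symm i) = (a ∘ ρ) (τ.symm i) := congrFun hbτ _
    simpa using this

/-- Real tuples with equal power sums `p_1, …, p_N` are equal as multisets
(Newton's identities). -/
theorem eq_multiset_of_psum_eq {N : ℕ} (a b : Fin N → ℝ)
    (h : ∀ k, 1 ≤ k → k ≤ N → ∑ j, a j ^ k = ∑ j, b j ^ k) :
    (Finset.univ.val.map a) = (Finset.univ.val.map b) := by
  have hps : ∀ k, 1 ≤ k → k ≤ N →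
      MvPolynomial.aeval a (MvPolynomial.psum (Fin N) ℝ k)
        = MvPolynomial.aeval b (MvPolynomial.psum (Fin N) ℝ k) := by
    intro k hk1 hkN
    simp only [MvPolynomial.psum, map_sum, map_pow, MvPolynomial.aeval_X]
    exact h k hk1 hkN
  have hE : ∀ k, k ≤ N →
      MvPolynomial.aeval a (MvPolynomial.esymm (Fin N) ℝ k)
        = MvPolynomial.aeval b (MvPolynomial.esymm (Fin N) ℝ k) := by
    intro k
    induction k using Nat.strong_induction_on with
    | _ k ih =>
      intro hkN
      rcases Nat.eq_zero_or_pos k with hk0 | hkpos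
      · subst hk0; simp [MvPolynomial.esymm]
      · have hna := congrArg (MvPolynomial.aeval (R := ℝ) a)
          (MvPolynomial.mul_esymm_eq_sum (Fin N) ℝ k)
        have hnb := congrArg (MvPolynomial.aeval (R := ℝ) b)
          (MvPolynomial.mul_esymm_eq_sum (Fin N) ℝ k)
        simp only [map_mul, map_sum, map_pow, map_natCast, map_neg, map_one] at hna hnb
        have hsum :
            ∑ p ∈ (antidiagonal k).filter (fun p => p.1 < k),
              (-1:ℝ) ^ p.1 * MvPolynomial.aeval a (MvPolynomial.esymm (Fin N) ℝ p.1)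
                * MvPolynomial.aeval a (MvPolynomial.psum (Fin N) ℝ p.2)
            = ∑ p ∈ (antidiagonal k).filter (fun p => p.1 < k),
              (-1:ℝ) ^ p.1 * MvPolynomial.aeval b (MvPolynomial.esymm (Fin N) ℝ p.1)
                * MvPolynomial.aeval b (MvPolynomial.psum (Fin N) ℝ p.2) := by
          refine Finset.sum_congr rfl fun p hp => ?_
          rw [Finset.mem_filter, Finset.HasAntidiagonal.mem_antidiagonal] at hp
          have h1 : p.1 < k := hp.2
          have hadd : p.1 + p.2 = k := hp.1
          have hp2 : 1 ≤ p.2 := by omega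
          have hp2N : p.2 ≤ N := by omega
          rw [ih p.1 h1 (by omega), hps p.2 hp2 hp2N]
        have hk' : (k : ℝ) ≠ 0 := Nat.cast_ne_zero.mpr (by omega)
        apply mul_left_cancel₀ hk'
        calc (k:ℝ) * MvPolynomial.aeval a (MvPolynomial.esymm (Fin N) ℝ k)
            = (-1:ℝ)^(k+1) * ∑ p ∈ (antidiagonal k).filter (fun p => p.1 < k),
              (-1:ℝ) ^ p.1 * MvPolynomial.aeval a (MvPolynomial.esymm (Fin N) ℝ p.1)
                * MvPolynomial.aeval a (MvPolynomial.psum (Fin N) ℝ p.2) := by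
              simpa using hna
          _ = (-1:ℝ)^(k+1) * ∑ p ∈ (antidiagonal k).filter (fun p => p.1 < k),
              (-1:ℝ) ^ p.1 * MvPolynomial.aeval b (MvPolynomial.esymm (Fin N) ℝ p.1)
                * MvPolynomial.aeval b (MvPolynomial.psum (Fin N) ℝ p.2) := by rw [hsum]
          _ = (k:ℝ) * MvPolynomial.aeval b (MvPolynomial.esymm (Fin N) ℝ k) := by
              simpa using hnb.symm
  set Ma : Multiset ℝ := Finset.univ.val.map a with hMa
  set Mb : Multiset ℝ := Finset.univ.val.map b with hMb
  have hcarda : Multiset.card Ma = N := by simp [hMa]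
  have hcardb : Multiset.card Mb = N := by simp [hMb]
  have hEm : ∀ k, k ≤ N → Ma.esymm k = Mb.esymm k := by
    intro k hk
    have := hE k hk
    rwa [MvPolynomial.aeval_esymm_eq_multiset_esymm, MvPolynomial.aeval_esymm_eq_multiset_esymm]
      at this
  have hpoly : (Ma.map fun t => Polynomial.X - Polynomial.C t).prod
      = (Mb.map fun t => Polynomial.X - Polynomial.C t).prod := by
    apply Polynomial.ext
    intro n
    by_cases hn : n ≤ N
    · rw [Multiset.prod_X_sub_C_coeff Ma (by rw [hcarda]; exact hn),
        Multiset.prod_X_sub_C_coeff Mb (by rw [hcardb]; exact hn), hcarda, hcardb,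
        hEm (N - n) (Nat.sub_le _ _)]
    · push_neg at hn
      rw [Polynomial.coeff_eq_zero_of_natDegree_lt, Polynomial.coeff_eq_zero_of_natDegree_lt]
      · rw [Polynomial.natDegree_multiset_prod_X_sub_C_eq_card, hcardb]; exact hn
      · rw [Polynomial.natDegree_multiset_prod_X_sub_C_eq_card, hcarda]; exact hn
  have := congrArg Polynomial.roots hpoly
  rwa [Polynomial.roots_multiset_prod_X_sub_C, Polynomial.roots_multiset_prod_X_sub_C] at this

/-- If the η-moment sums agree, all scalar power sums of any linear projection agree. -/
theorem proj_psum_eq {I N n : ℕ} (c : Fin I → ℝ) (x y : Fin n → Fin I → ℝ)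
    (heq : ∑ j, eta I N (x j) = ∑ j, eta I N (y j))
    (k : ℕ) (hk1 : 1 ≤ k) (hkN : k ≤ N) :
    ∑ j, (∑ i, c i * x j i) ^ k = ∑ j, (∑ i, c i * y j i) ^ k := by
  have key : ∀ z : Fin n → Fin I → ℝ,
      ∑ j, (∑ i, c i * z j i) ^ k
        = ∑ s ∈ Finset.univ.piAntidiag k,
            ((Nat.multinomial Finset.univ s : ℝ) * ∏ i, c i ^ s i)
              * ∑ j, ∏ i, z j i ^ s i := by
    intro z
    have expand : ∀ j, (∑ i, c i * z j i) ^ k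
        = ∑ s ∈ Finset.univ.piAntidiag k,
            ((Nat.multinomial Finset.univ s : ℝ) * ∏ i, c i ^ s i) * ∏ i, z j i ^ s i := by
      intro j
      rw [Finset.sum_pow_eq_sum_piAntidiag Finset.univ (fun i => c i * z j i) k]
      refine Finset.sum_congr rfl fun s _ => ?_
      simp_rw [mul_pow, Finset.prod_mul_distrib]
      ring
    simp_rw [expand]
    rw [Finset.sum_comm]
    simp_rw [Finset.mul_sum]
  rw [key x, key y]
  refine Finset.sum_congr rfl fun s hs => ?_
  rw [Finset.mem_piAntidiag] at hs
  have hsum : ∑ i, s i = k := hs.1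
  have hmem : 1 ≤ ∑ i, s i ∧ ∑ i, s i ≤ N := by omega
  have hx : ∑ j, ∏ i, x j i ^ s i = ∑ j, ∏ i, y j i ^ s i := by
    have := congrFun heq ⟨s, hmem⟩
    erw [Finset.sum_apply, Finset.sum_apply] at this
    simpa [_root_.eta] using this
  rw [hx]

/-- A finite set of points in ℝ^I admits a separating linear functional. -/
theorem exists_separating {I : ℕ} (pts : Finset (Fin I → ℝ)) :
    ∃ c : Fin I → ℝ, ∀ u ∈ pts, ∀ v ∈ pts, (∑ i, c i * u i = ∑ i, c i * v i) → u = v := by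
  classical
  let q : (Fin I → ℝ) → (Fin I → ℝ) → Polynomial ℝ :=
    fun u v => ∑ i : Fin I, Polynomial.C (u i - v i) * Polynomial.X ^ (i : ℕ)
  have hq_coeff : ∀ u v (i₀ : Fin I), (q u v).coeff (i₀ : ℕ) = u i₀ - v i₀ := by
    intro u v i₀
    simp only [q, Polynomial.finset_sum_coeff, Polynomial.coeff_C_mul, Polynomial.coeff_X_pow]
    rw [Finset.sum_eq_single i₀]
    · simp
    · intro i _ hne
      have h' : ¬((i₀ : ℕ) = (i : ℕ)) := fun h => hne (Fin.val_injective h.symm)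
      simp [if_neg h']
    · simp
  have hq_ne : ∀ u v, u ≠ v → q u v ≠ 0 := by
    intro u v huv h0
    apply huv
    funext i
    have hc := hq_coeff u v i
    rw [h0] at hc
    simp only [Polynomial.coeff_zero] at hc
    linarith
  let B : Set ℝ := ⋃ p ∈ ((pts ×ˢ pts).filter fun p => p.1 ≠ p.2),
      {t | (q p.1 p.2).IsRoot t}
  have hB : B.Finite := by
    refine Set.Finite.biUnion (Finset.finite_toSet _) fun p hp => ?_
    simp only [Finset.coe_filter, Set.mem_setOf_eq, Finset.mem_coe] at hp
    exact Polynomial.finite_setOf_isRoot (hq_ne p.1 p.2 hp.2)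
  obtain ⟨t, ht⟩ := hB.infinite_compl.nonempty
  refine ⟨fun i => t ^ (i : ℕ), fun u hu v hv hsum => ?_⟩
  by_contra hne
  apply ht
  have heval : (q u v).IsRoot t := by
    show (q u v).eval t = 0
    simp only [q, Polynomial.eval_finset_sum, Polynomial.eval_mul, Polynomial.eval_C,
      Polynomial.eval_pow, Polynomial.eval_X]
    have hsplit : ∑ i : Fin I, (u i - v i) * t ^ (i : ℕ)
        = (∑ i : Fin I, t ^ (i : ℕ) * u i) - ∑ i : Fin I, t ^ (i : ℕ) * v i := by
      rw [← Finset.sum_sub_distrib]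
      refine Finset.sum_congr rfl fun i _ => by ring
    rw [hsplit, hsum, sub_self]
  have hmem : ((u, v) : (Fin I → ℝ) × (Fin I → ℝ))
      ∈ (pts ×ˢ pts).filter fun p => p.1 ≠ p.2 := by
    simp [Finset.mem_filter, Finset.mem_product, hu, hv, hne]
  exact Set.mem_biUnion hmem heval

/-- Unconditional multiset injectivity of the moment map (for N points,
moments up to degree N). -/
theorem eta_injective {I N : ℕ} (x y : Fin N → Fin I → ℝ)
    (heq : ∑ j, eta I N (x j) = ∑ j, eta I N (y j)) :
    ∃ σ : Equiv.Perm (Fin N), y = x ∘ σ := by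
  classical
  obtain ⟨c, hc⟩ := exists_separating (Finset.univ.image x ∪ Finset.univ.image y)
  set a : Fin N → ℝ := fun j => ∑ i, c i * x j i with ha
  set b : Fin N → ℝ := fun j => ∑ i, c i * y j i with hb
  have hmul : (Finset.univ.val.map a) = (Finset.univ.val.map b) :=
    eq_multiset_of_psum_eq a b (fun k hk1 hkN => proj_psum_eq c x y heq k hk1 hkN)
  rw [Fin.univ_val_map, Fin.univ_val_map, Multiset.coe_eq_coe] at hmul
  obtain ⟨σ, hσ⟩ := exists_perm_of_ofFn_perm a b hmul
  refine ⟨σ, funext fun j => ?_⟩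
  have hj := congrFun hσ j
  exact hc (y j) (by simp [Finset.mem_union]) (x (σ j)) (by simp [Finset.mem_union]) hj

/-- exactness of moment-based state aggregation with
degree-(J−1) multisymmetric power sums: the moment map is injective on
multisets of J−1 competitor states, and the value function factors through
the moments via a continuous function. -/
theorem stmt_15 (I J : ℕ) (hJ : 0 < J)
    (Ω : Set (Fin I → ℝ)) (hΩc : IsCompact Ω)
    (hΩnn : ∀ x ∈ Ω, ∀ i, 0 ≤ x i)
    (m : Fin I → ℝ) (hmΩ : m ∈ Ω) (hmin : ∀ x ∈ Ω, ∀ i, m i ≤ x i)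
    (hmpos : ∀ i, 0 < m i)
    (V : (Fin I → ℝ) → (Fin (J - 1) → (Fin I → ℝ)) → ℝ)
    (hVperm : ∀ xj ∈ Ω, ∀ x : Fin (J - 1) → (Fin I → ℝ), (∀ j, x j ∈ Ω) →
      ∀ σ : Equiv.Perm (Fin (J - 1)), V xj (x ∘ σ) = V xj x)
    (hVcont : ContinuousOn
      (fun p : (Fin I → ℝ) × (Fin (J - 1) → (Fin I → ℝ)) => V p.1 p.2)
      (Ω ×ˢ {x | ∀ j, x j ∈ Ω})) :
    -- injectivity of the moment map on multisets of competitor states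
    (∀ x y : Fin (J - 1) → (Fin I → ℝ), (∀ j, x j ∈ Ω) → (∀ j, y j ∈ Ω) →
      ∑ j, eta I (J - 1) (x j) = ∑ j, eta I (J - 1) (y j) →
      ∃ σ : Equiv.Perm (Fin (J - 1)), y = x ∘ σ) ∧
    -- factorization of the value function through the moments
    (∃ Vb : (Fin I → ℝ) → (MIdx I (J - 1) → ℝ) → ℝ,
      ContinuousOn
        (fun p : (Fin I → ℝ) × (MIdx I (J - 1) → ℝ) => Vb p.1 p.2)
        (Ω ×ˢ (Set.univ : Set (MIdx I (J - 1) → ℝ))) ∧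
      ∀ xj ∈ Ω, ∀ x : Fin (J - 1) → (Fin I → ℝ), (∀ j, x j ∈ Ω) →
        V xj x = Vb xj (∑ j, eta I (J - 1) (x j))) := by
  classical
  refine ⟨fun x y _ _ heq => eta_injective x y heq, ?_⟩
  -- the competitor state space
  set K : Set (Fin (J - 1) → Fin I → ℝ) := {x | ∀ j, x j ∈ Ω} with hK
  have hKc : IsCompact K := by
    have : K = Set.pi Set.univ (fun _ : Fin (J - 1) => Ω) := by
      ext x; simp [hK, Set.mem_pi]
    rw [this]
    exact isCompact_univ_pi fun _ => hΩc
  set T : Set ((Fin I → ℝ) × (Fin (J - 1) → Fin I → ℝ)) := Ω ×ˢ K with hT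
  have hTc : IsCompact T := hΩc.prod hKc
  -- the moment map
  set μ : (Fin (J - 1) → Fin I → ℝ) → (MIdx I (J - 1) → ℝ) := fun x => ∑ j, eta I (J - 1) (x j) with hμ
  have hμcont : Continuous μ := by
    apply continuous_pi
    intro s
    have : (fun x : Fin (J - 1) → Fin I → ℝ => μ x s)
        = fun x => ∑ j, ∏ i, x j i ^ s.val i := by
      funext x; simp [hμ, _root_.eta, Finset.sum_apply]
    rw [this]
    exact continuous_finset_sum _ fun j _ =>
      continuous_finset_prod _ fun i _ =>
        (((continuous_apply i).comp (continuous_apply j)).pow _)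
  set Φ : ((Fin I → ℝ) × (Fin (J - 1) → Fin I → ℝ)) → ((Fin I → ℝ) × (MIdx I (J - 1) → ℝ)) :=
    fun p => (p.1, μ p.2) with hΦ
  have hΦcont : Continuous Φ := continuous_fst.prodMk (hμcont.comp continuous_snd)
  set S : Set ((Fin I → ℝ) × (MIdx I (J - 1) → ℝ)) := Φ '' T with hS
  have hSc : IsCompact S := hTc.image hΦcont
  have hScl : IsClosed S := hSc.isClosed
  -- constancy on fibers
  have hfiber : ∀ p q : (Fin I → ℝ) × (Fin (J - 1) → Fin I → ℝ), p ∈ T → q ∈ T →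
      Φ p = Φ q → V p.1 p.2 = V q.1 q.2 := by
    intro p q hp hq hpq
    have h1 : p.1 = q.1 := congrArg (fun r => r.1) hpq
    have h2 : μ p.2 = μ q.2 := congrArg (fun r => r.2) hpq
    obtain ⟨σ, hσ⟩ := eta_injective p.2 q.2 h2
    have hp1 : p.1 ∈ Ω := hp.1
    have hp2 : ∀ j, p.2 j ∈ Ω := hp.2
    rw [h1] at hp1 ⊢
    rw [hσ]
    exact (hVperm q.1 hp1 p.2 hp2 σ).symm
  -- the factored map on the compact image
  have hsurj : ∀ z : S, ∃ p : T, Φ p.val = z.val := by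
    rintro ⟨z, hz⟩
    obtain ⟨p, hp, hpz⟩ := hz
    exact ⟨⟨p, hp⟩, hpz⟩
  set g : S → ℝ := fun z => V (Classical.choose (hsurj z)).val.1
    (Classical.choose (hsurj z)).val.2 with hg
  have hgΦ : ∀ p : T, g ⟨Φ p.val, ⟨p.val, p.2, rfl⟩⟩ = V p.val.1 p.val.2 := by
    intro p
    have hch := Classical.choose_spec (hsurj ⟨Φ p.val, ⟨p.val, p.2, rfl⟩⟩)
    exact hfiber _ _ (Classical.choose (hsurj ⟨Φ p.val, ⟨p.val, p.2, rfl⟩⟩)).2 p.2 hch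
  -- continuity of g via the quotient map property
  haveI : CompactSpace T := isCompact_iff_compactSpace.mp hTc
  set Φ' : T → S := fun p => ⟨Φ p.val, ⟨p.val, p.2, rfl⟩⟩ with hΦ'
  have hΦ'cont : Continuous Φ' :=
    Continuous.subtype_mk (hΦcont.comp continuous_subtype_val) _
  have hΦ'surj : Function.Surjective Φ' := by
    rintro z
    obtain ⟨p, hp⟩ := hsurj z
    exact ⟨p, Subtype.ext hp⟩
  have hquot : IsQuotientMap Φ' :=
    (hΦ'cont.isClosedMap).isQuotientMap hΦ'cont hΦ'surj
  have hgcont : Continuous g := by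
    rw [hquot.continuous_iff]
    have : (g ∘ Φ') = fun p : T => V p.val.1 p.val.2 := by
      funext p
      exact hgΦ p
    rw [this]
    exact hVcont.restrict
  -- Tietze extension
  obtain ⟨G, hG⟩ := ContinuousMap.exists_restrict_eq (X := (Fin I → ℝ) × (MIdx I (J - 1) → ℝ))
    hScl ⟨g, hgcont⟩
  refine ⟨fun a mv => G (a, mv), ?_, ?_⟩
  · exact (G.continuous.comp (continuous_id)).continuousOn
  · intro xj hxj x hx
    have hmemT : ((xj, x) : (Fin I → ℝ) × (Fin (J - 1) → Fin I → ℝ)) ∈ T := ⟨hxj, hx⟩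
    have hz : Φ (xj, x) ∈ S := ⟨(xj, x), hmemT, rfl⟩
    have hGz : G (Φ (xj, x)) = g ⟨Φ (xj, x), hz⟩ := by
      have := congrFun (congrArg DFunLike.coe hG) ⟨Φ (xj, x), hz⟩
      simpa using this
    have : G (xj, μ x) = V xj x := by
      have h1 : G (Φ (xj, x)) = V xj x := by
        rw [hGz]
        exact hgΦ ⟨(xj, x), hmemT⟩
      simpa [hΦ] using h1
    rw [← this]
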